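/- The category POLY_R of polynomial tuples over a commutative semiring R (objects natural numbers, morphisms n → m are m-tuples of polynomials in R[x₁,…,x_n]) is a Cartesian differential category, with differential combinator D[p](x⃗, y⃗) := Σᵢ (∂p/∂xᵢ)(x⃗)·yᵢ applied componentwise. -/

import Mathlib

universe u v

/-- A Cartesian left additive category, with composition written in diagrammatic order:
`comp f g` is "`f` followed by `g`". -/
structure CLACat where
  Obj : Type u
  Hom : Obj → Obj → Type v
  id : ∀ A, Hom A A
  comp : ∀ {A B C}, Hom A B → Hom B C → Hom A C
  id_comp : ∀ {A B} (f : Hom A B), comp (id A) f = f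
  comp_id : ∀ {A B} (f : Hom A B), comp f (id B) = f
  assoc : ∀ {A B C D} (f : Hom A B) (g : Hom B C) (h : Hom C D),
    comp (comp f g) h = comp f (comp g h)
  /-- chosen binary product on objects -/
  prod : Obj → Obj → Obj
  /-- first projection -/
  p0 : ∀ {A B}, Hom (prod A B) A
  /-- second projection -/
  p1 : ∀ {A B}, Hom (prod A B) B
  /-- pairing -/
  pair : ∀ {C A B}, Hom C A → Hom C B → Hom C (prod A B)
  pair_p0 : ∀ {C A B} (f : Hom C A) (g : Hom C B), comp (pair f g) p0 = f
  pair_p1 : ∀ {C A B} (f : Hom C A) (g : Hom C B), comp (pair f g) p1 = g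
  pair_unique : ∀ {C A B} (h : Hom C (prod A B)), pair (comp h p0) (comp h p1) = h
  /-- chosen terminal object -/
  one : Obj
  bang : ∀ A, Hom A one
  bang_unique : ∀ {A} (f : Hom A one), f = bang A
  /-- commutative monoid structure on each hom-set -/
  add : ∀ {A B}, Hom A B → Hom A B → Hom A B
  zero : ∀ {A B}, Hom A B
  add_assoc' : ∀ {A B} (f g h : Hom A B), add (add f g) h = add f (add g h)
  add_comm' : ∀ {A B} (f g : Hom A B), add f g = add g f
  add_zero' : ∀ {A B} (f : Hom A B), add f zero = f
  /-- composition on the left preserves addition -/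
  comp_add : ∀ {A B C} (x : Hom A B) (f g : Hom B C),
    comp x (add f g) = add (comp x f) (comp x g)
  comp_zero : ∀ {A B C} (x : Hom A B), comp x (zero : Hom B C) = (zero : Hom A C)
  /-- projections are additive -/
  add_comp_p0 : ∀ {C A B} (f g : Hom C (prod A B)),
    comp (add f g) p0 = add (comp f p0) (comp g p0)
  zero_comp_p0 : ∀ {C A B}, comp (zero : Hom C (prod A B)) p0 = (zero : Hom C A)
  add_comp_p1 : ∀ {C A B} (f g : Hom C (prod A B)),
    comp (add f g) p1 = add (comp f p1) (comp g p1)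
  zero_comp_p1 : ∀ {C A B}, comp (zero : Hom C (prod A B)) p1 = (zero : Hom C B)

namespace CLACat

variable (X : CLACat)

/-- first injection ι₀ := ⟨1,0⟩ : A → A×B -/
def i0 {A B : X.Obj} : X.Hom A (X.prod A B) := X.pair (X.id A) X.zero

/-- second injection ι₁ := ⟨0,1⟩ : B → A×B -/
def i1 {A B : X.Obj} : X.Hom B (X.prod A B) := X.pair X.zero (X.id B)

/-- the product map h×k -/
def prodMap {A B C D : X.Obj} (h : X.Hom A B) (k : X.Hom C D) :
    X.Hom (X.prod A C) (X.prod B D) :=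
  X.pair (X.comp X.p0 h) (X.comp X.p1 k)

/-- the exchange isomorphism ex := ⟨π₀×π₀, π₁×π₁⟩ -/
def ex {A B C D : X.Obj} :
    X.Hom (X.prod (X.prod A B) (X.prod C D)) (X.prod (X.prod A C) (X.prod B D)) :=
  X.pair (X.prodMap X.p0 X.p0) (X.prodMap X.p1 X.p1)

/-- a map is additive when precomposition with it preserves the additive structure -/
def Additive {A B : X.Obj} (h : X.Hom A B) : Prop :=
  (∀ {C : X.Obj} (x y : X.Hom C A), X.comp (X.add x y) h = X.add (X.comp x h) (X.comp y h)) ∧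
  (∀ {C : X.Obj}, X.comp (X.zero : X.Hom C A) h = X.zero)

end CLACat
/-- The axioms of a Cartesian differential category, for a differential combinator `D`
on a Cartesian left additive category `X`. -/
structure CDCAxioms (X : CLACat)
    (D : ∀ {A B : X.Obj}, X.Hom A B → X.Hom (X.prod A A) B) : Prop where
  cdc1_add : ∀ {A B} (f g : X.Hom A B), D (X.add f g) = X.add (D f) (D g)
  cdc1_zero : ∀ {A B}, D (X.zero : X.Hom A B) = X.zero
  cdc2_add : ∀ {C A B} (a b c : X.Hom C A) (f : X.Hom A B),
    X.comp (X.pair a (X.add b c)) (D f)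
      = X.add (X.comp (X.pair a b) (D f)) (X.comp (X.pair a c) (D f))
  cdc2_zero : ∀ {C A B} (a : X.Hom C A) (f : X.Hom A B),
    X.comp (X.pair a X.zero) (D f) = X.zero
  cdc3_id : ∀ {A}, D (X.id A) = X.p1
  cdc3_p0 : ∀ {A B}, D (X.p0 : X.Hom (X.prod A B) A) = X.comp X.p1 X.p0
  cdc3_p1 : ∀ {A B}, D (X.p1 : X.Hom (X.prod A B) B) = X.comp X.p1 X.p1
  cdc4 : ∀ {A B C} (f : X.Hom A B) (g : X.Hom A C),
    D (X.pair f g) = X.pair (D f) (D g)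
  cdc5 : ∀ {A B C} (f : X.Hom A B) (g : X.Hom B C),
    D (X.comp f g) = X.comp (X.pair (X.comp X.p0 f) (D f)) (D g)
  cdc6 : ∀ {C A B} (a b c : X.Hom C A) (f : X.Hom A B),
    X.comp (X.pair (X.pair a b) (X.pair X.zero c)) (D (D f)) = X.comp (X.pair a c) (D f)
  cdc7 : ∀ {C A B} (a b c d : X.Hom C A) (f : X.Hom A B),
    X.comp (X.pair (X.pair a b) (X.pair c d)) (D (D f))
      = X.comp (X.pair (X.pair a c) (X.pair b d)) (D (D f))

namespace CLACat

/-- The forward differential combinator induced by a reverse differential combinator: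
`D[f] := (⟨1,0⟩ × 1) R[R[f]] π₁`. -/
def Dof (X : CLACat) (R : ∀ {A B : X.Obj}, X.Hom A B → X.Hom (X.prod A B) A)
    {A B : X.Obj} (f : X.Hom A B) : X.Hom (X.prod A A) B :=
  X.comp (X.prodMap X.i0 (X.id A)) (X.comp (R (R f)) X.p1)

/-- The dagger induced by a reverse differential combinator: `f† := ι₁ R[f]`. -/
def dag (X : CLACat) (R : ∀ {A B : X.Obj}, X.Hom A B → X.Hom (X.prod A B) A)
    {A B : X.Obj} (f : X.Hom A B) : X.Hom B A :=
  X.comp X.i1 (R f)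

end CLACat

/-- The axioms of a Cartesian reverse differential category, for a reverse differential
combinator `R` on a Cartesian left additive category `X`. -/
structure RDCAxioms (X : CLACat)
    (R : ∀ {A B : X.Obj}, X.Hom A B → X.Hom (X.prod A B) A) : Prop where
  rd1_add : ∀ {A B} (f g : X.Hom A B), R (X.add f g) = X.add (R f) (R g)
  rd1_zero : ∀ {A B}, R (X.zero : X.Hom A B) = X.zero
  rd2_add : ∀ {C A B} (a : X.Hom C A) (b c : X.Hom C B) (f : X.Hom A B),
    X.comp (X.pair a (X.add b c)) (R f)
      = X.add (X.comp (X.pair a b) (R f)) (X.comp (X.pair a c) (R f))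
  rd2_zero : ∀ {C A B} (a : X.Hom C A) (f : X.Hom A B),
    X.comp (X.pair a X.zero) (R f) = X.zero
  rd3_id : ∀ {A}, R (X.id A) = X.p1
  rd3_p0 : ∀ {A B}, R (X.p0 : X.Hom (X.prod A B) A) = X.comp X.p1 X.i0
  rd3_p1 : ∀ {A B}, R (X.p1 : X.Hom (X.prod A B) B) = X.comp X.p1 X.i1
  rd4 : ∀ {A B C} (f : X.Hom A B) (g : X.Hom A C),
    R (X.pair f g) = X.add (X.comp (X.prodMap (X.id A) X.p0) (R f))
                           (X.comp (X.prodMap (X.id A) X.p1) (R g))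
  rd4_bang : ∀ {A}, R (X.bang A) = X.zero
  rd5 : ∀ {A B C} (f : X.Hom A B) (g : X.Hom B C),
    R (X.comp f g) = X.comp (X.pair X.p0 (X.pair (X.comp X.p0 f) X.p1))
                            (X.comp (X.prodMap (X.id A) (R g)) (R f))
  rd6 : ∀ {A B} (f : X.Hom A B),
    X.comp (X.pair (X.prodMap (X.id A) X.p0) (X.prodMap (X.zero : X.Hom A A) X.p1))
      (X.comp (X.prodMap (X.i0 : X.Hom (X.prod A B) (X.prod (X.prod A B) A)) (X.id (X.prod A B)))
        (X.comp (R (R (R f))) X.p1))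
    = X.comp (X.prodMap (X.id A) X.p1) (R f)
  rd7 : ∀ {A B} (f : X.Hom A B),
    X.Dof (fun {_ _} g => R g) (X.Dof (fun {_ _} g => R g) f)
      = X.comp X.ex (X.Dof (fun {_ _} g => R g) (X.Dof (fun {_ _} g => R g) f))

open MvPolynomial in
/-- The category `POLY_R` of polynomial tuples over a commutative semiring `R`:
objects are natural numbers, a map `n → m` is an `m`-tuple of polynomials in
`R[x₁,…,xₙ]`, composition is substitution, the product of objects is addition of
natural numbers, and the additive structure is the sum of polynomials. -/
noncomputable def PolyCat (R : Type) [CommSemiring R] : CLACat where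
  Obj := ℕ
  Hom n m := Fin m → MvPolynomial (Fin n) R
  id n := fun i => X i
  comp f g := fun j => aeval f (g j)
  id_comp f := by funext j; simp
  comp_id f := by funext j; simp
  assoc f g h := by
    funext j
    simp only []
    induction h j using MvPolynomial.induction_on with
    | C a => simp
    | add p q hp hq => simp_all
    | mul_X p i hp => simp_all
  prod n m := n + m
  p0 {n m} := fun i => X (Fin.castAdd m i)
  p1 {n m} := fun j => X (Fin.natAdd n j)
  pair f g := Fin.addCases f g
  pair_p0 f g := by funext i; simp
  pair_p1 f g := by funext j; simp
  pair_unique h := by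
    funext k
    induction k using Fin.addCases with
    | left i => simp
    | right j => simp
  one := 0
  bang n := Fin.elim0
  bang_unique f := by funext i; exact i.elim0
  add f g := fun j => f j + g j
  zero := fun _ => 0
  add_assoc' f g h := by funext j; ring
  add_comm' f g := by funext j; ring
  add_zero' f := by funext j; ring
  comp_add x f g := by funext j; simp
  comp_zero x := by funext j; simp
  add_comp_p0 f g := by funext i; simp
  zero_comp_p0 := by intro C A B; funext i; simp
  add_comp_p1 f g := by funext j; simp
  zero_comp_p1 := by intro C A B; funext j; simp

open MvPolynomial

section Helpers

variable {R : Type} [CommSemiring R]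

variable {n m c : ℕ}

variable {R : Type} [CommSemiring R]

section Helpers

variable {n m c : ℕ}

theorem pderiv_pderiv_comm {σ : Type*} [DecidableEq σ] (i j : σ) (p : MvPolynomial σ R) :
    pderiv i (pderiv j p) = pderiv j (pderiv i p) := by
  induction p using MvPolynomial.induction_on' with
  | add p q hp hq => simp [hp, hq]
  | monomial s a =>
    rcases eq_or_ne i j with rfl | hij
    · rfl
    · simp only [pderiv_monomial]
      rw [tsub_tsub, tsub_tsub, add_comm]
      congr 1
      · simp only [Finsupp.tsub_apply, Finsupp.single_apply, if_neg hij, if_neg (Ne.symm hij),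
          tsub_zero]
        ring

theorem pderiv_aeval_fin (f : Fin n → MvPolynomial (Fin c) R) (p : MvPolynomial (Fin n) R)
    (u : Fin c) :
    pderiv u (aeval f p) = ∑ k : Fin n, aeval f (pderiv k p) * pderiv u (f k) := by
  induction p using MvPolynomial.induction_on with
  | C a => simp
  | add p q hp hq => simp only [map_add, hp, hq, add_mul, Finset.sum_add_distrib]
  | mul_X p i hp =>
    simp only [map_mul, aeval_X, pderiv_mul, hp, pderiv_X, Finset.sum_mul, add_mul, map_add,
      Finset.sum_add_distrib]
    congr 1
    · exact Finset.sum_congr rfl fun k _ => by ring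
    · rw [Finset.sum_eq_single i]
      · simp
      · intro k _ hk
        rw [Pi.single_apply, if_neg (Ne.symm hk)]
        simp
      · simp

theorem pderiv_natAdd_rename_castAdd (p : MvPolynomial (Fin n) R) (a : Fin n) :
    pderiv (Fin.natAdd n a) (rename (Fin.castAdd n) p) = 0 := by
  apply pderiv_eq_zero_of_notMem_vars
  intro h
  obtain ⟨i, -, hi⟩ := Finset.mem_image.mp (vars_rename _ _ h)
  exact absurd (congrArg Fin.val hi) (by simp; omega)

theorem pderiv_castAdd_rename_castAdd (p : MvPolynomial (Fin n) R) (a : Fin n) :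
    pderiv (Fin.castAdd n a) (rename (Fin.castAdd n) p)
      = rename (Fin.castAdd n) (pderiv a p) :=
  pderiv_rename (Fin.castAdd_injective n n) a p

theorem addCases_comp_castAdd {α : Sort*} (a : Fin n → α) (b : Fin m → α) :
    (fun i => Fin.addCases a b (Fin.castAdd m i)) = a := by
  funext i; simp

theorem addCases_comp_natAdd {α : Sort*} (a : Fin n → α) (b : Fin m → α) :
    (fun i => Fin.addCases a b (Fin.natAdd n i)) = b := by
  funext i; simp

theorem aeval_rename_castAdd (a : Fin n → MvPolynomial (Fin c) R)
    (b : Fin m → MvPolynomial (Fin c) R) (p : MvPolynomial (Fin n) R) :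
    aeval (Fin.addCases a b : Fin (n + m) → _) (rename (Fin.castAdd m) p) = aeval a p := by
  rw [aeval_rename]
  have h : (fun i => Fin.addCases a b i) ∘ Fin.castAdd m = a := by funext i; simp [Function.comp]
  rw [h]

theorem aeval_X_castAdd (p : MvPolynomial (Fin n) R) :
    aeval (fun i => (X (Fin.castAdd m i) : MvPolynomial (Fin (n + m)) R)) p
      = rename (Fin.castAdd m) p := by
  rw [← aeval_X_left_apply (rename (Fin.castAdd m) p), aeval_rename]; rfl

end Helpers

open MvPolynomial in
/-- The differential combinator of `POLY_R`:
`D[p](x⃗,y⃗) := Σᵢ (∂p/∂xᵢ)(x⃗)·yᵢ`, componentwise. -/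
noncomputable def polyD (R : Type) [CommSemiring R] {n m : ℕ}
    (f : Fin m → MvPolynomial (Fin n) R) :
    Fin m → MvPolynomial (Fin (n + n)) R :=
  fun j => ∑ i : Fin n,
    (rename (Fin.castAdd n) (pderiv i (f j))) * X (Fin.natAdd n i)

section Helpers2
open MvPolynomial
variable {R : Type} [CommSemiring R] {n m c : ℕ}

theorem aeval_polyD (a b : Fin n → MvPolynomial (Fin c) R)
    (f : Fin m → MvPolynomial (Fin n) R) (j : Fin m) :
    aeval (Fin.addCases a b : Fin (n + n) → _) (polyD R f j)
      = ∑ i : Fin n, aeval a (pderiv i (f j)) * b i := by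
  simp only [polyD, map_sum, map_mul, aeval_rename_castAdd, aeval_X, Fin.addCases_right]

theorem pderiv_natAdd_polyD (f : Fin m → MvPolynomial (Fin n) R) (j : Fin m) (i : Fin n) :
    pderiv (Fin.natAdd n i) (polyD R f j) = rename (Fin.castAdd n) (pderiv i (f j)) := by
  simp only [polyD, map_sum, pderiv_mul, pderiv_natAdd_rename_castAdd, zero_mul, zero_add]
  rw [Finset.sum_eq_single i]
  · simp
  · intro k _ hk
    rw [pderiv_X_of_ne, mul_zero]
    simp [Fin.ext_iff]
    omega
  · simp

theorem pderiv_castAdd_polyD (f : Fin m → MvPolynomial (Fin n) R) (j : Fin m) (a : Fin n) :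
    pderiv (Fin.castAdd n a) (polyD R f j)
      = ∑ i : Fin n, rename (Fin.castAdd n) (pderiv a (pderiv i (f j))) * X (Fin.natAdd n i) := by
  simp only [polyD, map_sum, pderiv_mul, pderiv_castAdd_rename_castAdd]
  refine Finset.sum_congr rfl fun k _ => ?_
  rw [pderiv_X_of_ne, mul_zero, add_zero]
  simp [Fin.ext_iff]
  omega

end Helpers2

/-- `POLY_R` with the componentwise combinator
`D[p](x⃗,y⃗) = Σᵢ (∂p/∂xᵢ)(x⃗)yᵢ` is a Cartesian differential category. -/
theorem polyCat_is_cdc (R : Type) [CommSemiring R] :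
    CDCAxioms (PolyCat R) (fun {_ _} f => polyD R f) := by
  constructor
  case cdc1_add =>
    intro A B f g
    funext j
    show polyD R (fun j => f j + g j) j = polyD R f j + polyD R g j
    simp [polyD, add_mul, Finset.sum_add_distrib]
  case cdc1_zero =>
    intro A B
    funext j
    show polyD R (fun _ => 0) j = 0
    simp [polyD]
  case cdc2_add =>
    intro (C : ℕ) (A : ℕ) (B : ℕ) (a : (Fin A → MvPolynomial (Fin C) R)) (b : (Fin A → MvPolynomial (Fin C) R)) (c : (Fin A → MvPolynomial (Fin C) R)) (f : (Fin B → MvPolynomial (Fin A) R))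
    funext j
    show aeval (Fin.addCases a (fun i => b i + c i)) (polyD R f j)
      = aeval (Fin.addCases a b) (polyD R f j) + aeval (Fin.addCases a c) (polyD R f j)
    rw [aeval_polyD, aeval_polyD, aeval_polyD]
    simp [mul_add, Finset.sum_add_distrib]
  case cdc2_zero =>
    intro (C : ℕ) (A : ℕ) (B : ℕ) (a : (Fin A → MvPolynomial (Fin C) R)) (f : (Fin B → MvPolynomial (Fin A) R))
    funext j
    show aeval (Fin.addCases a (fun _ => 0)) (polyD R f j) = 0
    rw [aeval_polyD]
    simp
  case cdc3_id =>
    intro A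
    funext j
    show polyD R (fun i => X i) j = X (Fin.natAdd A j)
    simp only [polyD]
    rw [Finset.sum_eq_single j]
    · simp
    · intro k _ hk
      rw [pderiv_X_of_ne (Ne.symm hk)]
      simp
    · simp
  case cdc3_p0 =>
    intro (A : ℕ) (B : ℕ)
    funext i
    show polyD R (fun i => X (Fin.castAdd B i)) i
      = aeval (fun j => X (Fin.natAdd (Nat.add A B) j)) (X (Fin.castAdd B i))
    simp only [polyD, aeval_X]
    rw [Finset.sum_eq_single (Fin.castAdd B i)]
    · erw [aeval_X]; simp
    · intro k _ hk
      rw [pderiv_X_of_ne (Ne.symm hk)]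
      simp
    · simp
  case cdc3_p1 =>
    intro (A : ℕ) (B : ℕ)
    funext i
    show polyD R (fun i => X (Fin.natAdd A i)) i
      = aeval (fun j => X (Fin.natAdd (Nat.add A B) j)) (X (Fin.natAdd A i))
    simp only [polyD, aeval_X]
    rw [Finset.sum_eq_single (Fin.natAdd A i)]
    · erw [aeval_X]; simp
    · intro k _ hk
      rw [pderiv_X_of_ne (Ne.symm hk)]
      simp
    · simp
  case cdc4 =>
    intro (A : ℕ) (B : ℕ) (C : ℕ) (f : (Fin B → MvPolynomial (Fin A) R)) (g : (Fin C → MvPolynomial (Fin A) R))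
    funext k
    show polyD R (Fin.addCases f g) k = Fin.addCases (polyD R f) (polyD R g) k
    induction k using Fin.addCases with
    | left i => erw [Fin.addCases_left]; simp [polyD]
    | right j => erw [Fin.addCases_right]; simp [polyD]
  case cdc5 =>
    intro (A : ℕ) (B : ℕ) (C : ℕ) (f : (Fin B → MvPolynomial (Fin A) R)) (g : (Fin C → MvPolynomial (Fin B) R))
    funext j
    show polyD R (fun j => aeval f (g j)) j
      = aeval (Fin.addCases (fun k => aeval (fun i => X (Fin.castAdd A i)) (f k)) (polyD R f))
          (polyD R g j)
    rw [aeval_polyD]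
    simp only [polyD, pderiv_aeval_fin, map_sum, map_mul, Finset.sum_mul]
    rw [Finset.sum_comm]
    refine Finset.sum_congr rfl fun k _ => ?_
    simp only [aeval_X_castAdd]
    rw [← comp_aeval_apply]
    rw [Finset.mul_sum]
    exact Finset.sum_congr rfl fun u _ => mul_assoc _ _ _
  case cdc6 =>
    intro (C : ℕ) (A : ℕ) (B : ℕ) (a : (Fin A → MvPolynomial (Fin C) R)) (b : (Fin A → MvPolynomial (Fin C) R)) (c : (Fin A → MvPolynomial (Fin C) R)) (f : (Fin B → MvPolynomial (Fin A) R))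
    funext j
    show aeval (Fin.addCases (Fin.addCases a b) (Fin.addCases (fun _ => (0 : MvPolynomial (Fin C) R)) c))
        (polyD R (polyD R f) j) = aeval (Fin.addCases a c) (polyD R f j)
    rw [aeval_polyD, aeval_polyD, Fin.sum_univ_add]
    simp only [Fin.addCases_left, Fin.addCases_right, mul_zero, Finset.sum_const_zero, zero_add,
      pderiv_natAdd_polyD, aeval_rename_castAdd]
  case cdc7 =>
    intro (C : ℕ) (A : ℕ) (B : ℕ) (a : (Fin A → MvPolynomial (Fin C) R)) (b : (Fin A → MvPolynomial (Fin C) R)) (c : (Fin A → MvPolynomial (Fin C) R)) (d : (Fin A → MvPolynomial (Fin C) R)) (f : (Fin B → MvPolynomial (Fin A) R))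
    funext j
    show aeval (Fin.addCases (Fin.addCases a b) (Fin.addCases c d)) (polyD R (polyD R f) j)
      = aeval (Fin.addCases (Fin.addCases a c) (Fin.addCases b d)) (polyD R (polyD R f) j)
    rw [aeval_polyD, aeval_polyD, Fin.sum_univ_add, Fin.sum_univ_add]
    simp only [Fin.addCases_left, Fin.addCases_right, pderiv_natAdd_polyD, pderiv_castAdd_polyD,
      aeval_rename_castAdd, map_sum, map_mul, aeval_X, Finset.sum_mul]
    congr 1
    rw [Finset.sum_comm]
    refine Finset.sum_congr rfl fun u _ => Finset.sum_congr rfl fun k _ => ?_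
    rw [pderiv_pderiv_comm]
    ring
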